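/- Let $T$ be a Calderón–Zygmund operator with kernel $K$ satisfying $|K(t,s)-K(t',s)| \le |t-t'|^{\epsilon}/|t-s|^{d+\epsilon}$ for $|t-t'|\le\frac{1}{2}|t-s|$. Let $I,J$ be cubes with $\ell(I)\le\ell(J)$ and $\operatorname{dist}(I,J)\ge\ell(J)$, and let $\varphi\in L^2(\mu)$ be supported on $I$ with $\int\varphi\,d\mu=0$ and $\psi\in L^2(\nu)$ supported on $J$. Then $|\int\!\!\int K(t,s)\varphi(t)\psi(s)\,d\mu(t)\,d\nu(s)| \le A\,\frac{\ell(I)^{\epsilon}}{(\operatorname{dist}(I,J)+\ell(I)+\ell(J))^{d+\epsilon}}\,\mu(I)^{1/2}\nu(J)^{1/2}\|\varphi\|_{L^2(\mu)}\|\psi\|_{L^2(\nu)}$. -/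

import Mathlib

open MeasureTheory Set
open scoped ENNReal
noncomputable section

/-- Points of `ℝ^d`. -/
abbrev Rd (d : ℕ) := Fin d → ℝ

/-- The (closed, axis-parallel) cube with lower-left corner `a` and side length `ℓ`. -/
def cube {d : ℕ} (a : Rd d) (ℓ : ℝ) : Set (Rd d) := {x | ∀ i, a i ≤ x i ∧ x i ≤ a i + ℓ}

/-- Distance between two sets: `inf { dist x y : x ∈ s, y ∈ t }`. -/
def setDist {X : Type*} [PseudoMetricSpace X] (s t : Set X) : ℝ :=
  sInf ((fun p : X × X => dist p.1 p.2) '' s ×ˢ t)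

lemma cube_eq_Icc {d : ℕ} (a : Rd d) (ℓ : ℝ) :
    cube a ℓ = Icc a (fun i => a i + ℓ) := by
  ext x
  constructor
  · intro h
    exact ⟨fun i => (h i).1, fun i => (h i).2⟩
  · intro h i
    exact ⟨h.1 i, h.2 i⟩

lemma cube_measurable {d : ℕ} (a : Rd d) (ℓ : ℝ) : MeasurableSet (cube a ℓ) := by
  rw [cube_eq_Icc]; exact measurableSet_Icc

lemma cube_compact {d : ℕ} (a : Rd d) (ℓ : ℝ) : IsCompact (cube a ℓ) := by
  rw [cube_eq_Icc]; exact isCompact_Icc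

lemma setDist_le {X : Type*} [PseudoMetricSpace X] {s t : Set X} {x y : X}
    (hx : x ∈ s) (hy : y ∈ t) : setDist s t ≤ dist x y := by
  refine csInf_le ⟨0, ?_⟩ ⟨(x, y), ⟨hx, hy⟩, rfl⟩
  rintro _ ⟨⟨a, b⟩, -, rfl⟩
  exact dist_nonneg

/-- Cauchy–Schwarz for a function supported on a set of finite measure. -/
lemma integral_abs_le_sqrt_mul {X : Type*} [MeasurableSpace X] {μ : Measure X}
    {f : X → ℝ} {S : Set X} (hS : MeasurableSet S) (hμS : μ S ≠ ∞)
    (hf : MemLp f 2 μ) (h0 : ∀ x ∉ S, f x = 0) :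
    ∫ x, |f x| ∂μ ≤ (μ S).toReal ^ (1/2 : ℝ) * (eLpNorm f 2 μ).toReal := by
  set g : X → ℝ := S.indicator (fun _ => (1 : ℝ)) with hg
  have hgmem : MemLp g 2 μ := memLp_indicator_const 2 hS 1 (Or.inr hμS)
  have h22 : (2 : ℝ).HolderConjugate 2 := ⟨by norm_num, by norm_num, by norm_num⟩
  have hfmem : MemLp f (ENNReal.ofReal 2) μ := by
    simpa [ENNReal.ofReal_ofNat] using hf
  have hgmem' : MemLp g (ENNReal.ofReal 2) μ := by
    simpa [ENNReal.ofReal_ofNat] using hgmem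
  have key := integral_mul_norm_le_Lp_mul_Lq (μ := μ) h22 hfmem hgmem'
  have h1 : ∫ x, |f x| ∂μ = ∫ x, ‖f x‖ * ‖g x‖ ∂μ := by
    refine integral_congr_ae (ae_of_all _ fun x => ?_)
    by_cases hx : x ∈ S
    · simp [hg, indicator_of_mem hx, Real.norm_eq_abs]
    · simp [hg, indicator_of_notMem hx, h0 x hx]
  have h2 : ∫ x, ‖g x‖ ^ (2 : ℝ) ∂μ = (μ S).toReal := by
    have : (fun x => ‖g x‖ ^ (2 : ℝ)) = S.indicator (fun _ => (1 : ℝ)) := by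
      funext x
      by_cases hx : x ∈ S
      · simp [hg, indicator_of_mem hx]
      · simp [hg, indicator_of_notMem hx, Real.zero_rpow (by norm_num : (2:ℝ) ≠ 0)]
    rw [this]
    exact integral_indicator_one (μ := μ) hS
  have h3 : (eLpNorm f 2 μ).toReal = (∫ x, ‖f x‖ ^ (2 : ℝ) ∂μ) ^ ((1:ℝ)/2) := by
    rw [hf.eLpNorm_eq_integral_rpow_norm (by norm_num) (by norm_num)]
    rw [ENNReal.toReal_ofReal (Real.rpow_nonneg (by
      positivity) _)]
    norm_num
  rw [h1, h3]
  calc ∫ x, ‖f x‖ * ‖g x‖ ∂μ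
      ≤ (∫ x, ‖f x‖ ^ (2:ℝ) ∂μ) ^ ((1:ℝ)/2) * (∫ x, ‖g x‖ ^ (2:ℝ) ∂μ) ^ ((1:ℝ)/2) := key
    _ = (μ S).toReal ^ (1/2 : ℝ) * (∫ x, ‖f x‖ ^ (2:ℝ) ∂μ) ^ ((1:ℝ)/2) := by
        rw [h2]; ring

/-- Long-range estimate: if `K` is a Calderón–Zygmund kernel, `I, J` are cubes with
`ℓ(I) ≤ ℓ(J)` and `dist(I,J) ≥ ℓ(J)`, `φ` is supported on `I` with zero `μ`-mean and
`ψ` is supported on `J`, then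
`|∬ K(t,s) φ(t) ψ(s) dμ(t) dν(s)| ≤ A ℓ(I)^ε (dist(I,J)+ℓ(I)+ℓ(J))^{-(d+ε)}
  μ(I)^{1/2} ν(J)^{1/2} ‖φ‖_{L²(μ)} ‖ψ‖_{L²(ν)}`. -/
theorem stmt7 {d : ℕ} (hd : 0 < d) (ε : ℝ) (hε : 0 < ε) :
    ∃ A : ℝ, 0 < A ∧
      ∀ (K : Rd d → Rd d → ℝ), Measurable (Function.uncurry K) →
        (∀ t s, t ≠ s → |K t s| ≤ ‖t - s‖ ^ (-(d : ℝ))) →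
        (∀ t t' s, ‖t - t'‖ ≤ ‖t - s‖ / 2 →
          |K t s - K t' s| ≤ ‖t - t'‖ ^ ε / ‖t - s‖ ^ ((d : ℝ) + ε)) →
      ∀ (μ ν : Measure (Rd d)), IsLocallyFiniteMeasure μ → IsLocallyFiniteMeasure ν →
      ∀ (aI : Rd d) (ℓI : ℝ) (aJ : Rd d) (ℓJ : ℝ), 0 < ℓI → ℓI ≤ ℓJ →
        ℓJ ≤ setDist (cube aI ℓI) (cube aJ ℓJ) →
      ∀ (φ ψ : Rd d → ℝ),
        Integrable φ μ → MemLp φ 2 μ → MemLp ψ 2 ν →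
        (∀ x, x ∉ cube aI ℓI → φ x = 0) → (∫ t, φ t ∂μ) = 0 →
        (∀ x, x ∉ cube aJ ℓJ → ψ x = 0) →
        |∫ s, (∫ t, K t s * φ t ∂μ) * ψ s ∂ν|
          ≤ A * (ℓI ^ ε / (setDist (cube aI ℓI) (cube aJ ℓJ) + ℓI + ℓJ) ^ ((d : ℝ) + ε))
              * ((μ (cube aI ℓI)).toReal) ^ (1/2 : ℝ) * ((ν (cube aJ ℓJ)).toReal) ^ (1/2 : ℝ)
              * (eLpNorm φ 2 μ).toReal * (eLpNorm ψ 2 ν).toReal := by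
  set p : ℝ := (d : ℝ) + ε with hp
  have hppos : 0 < p := by positivity
  refine ⟨3 ^ p, by positivity, ?_⟩
  intro K hKmeas hKsize hKsmooth μ ν hμloc hνloc aI ℓI aJ ℓJ hℓI hℓIJ hdist
  intro φ ψ hφint hφ2 hψ2 hφ0 hφmean hψ0
  haveI := hμloc; haveI := hνloc
  set I : Set (Rd d) := cube aI ℓI with hI
  set J : Set (Rd d) := cube aJ ℓJ with hJ
  set D : ℝ := setDist I J with hD
  have hDpos : 0 < D := lt_of_lt_of_le (lt_of_lt_of_le hℓI hℓIJ) hdist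
  have hℓJpos : 0 < ℓJ := lt_of_lt_of_le hℓI hℓIJ
  -- distance lower bound
  have hdist' : ∀ t ∈ I, ∀ s ∈ J, D ≤ ‖t - s‖ := by
    intro t ht s hs
    have := setDist_le (s := I) (t := J) ht hs
    rwa [dist_eq_norm] at this
  -- the center of I
  set c : Rd d := fun i => aI i + ℓI / 2 with hc
  have hcenter : ∀ t ∈ I, ‖t - c‖ ≤ ℓI / 2 := by
    intro t ht
    rw [pi_norm_le_iff_of_nonneg (by positivity)]
    intro i
    have h1 := (ht i).1
    have h2 := (ht i).2
    rw [Real.norm_eq_abs, abs_le]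
    constructor <;> · simp only [Pi.sub_apply, hc]; linarith
  -- measurability of slices
  have hKm : ∀ s, Measurable fun t => K t s := fun s =>
    hKmeas.comp (measurable_id.prodMk measurable_const)
  -- inner integrand integrable for s ∈ J
  have hint1 : ∀ s ∈ J, Integrable (fun t => K t s * φ t) μ := by
    intro s hs
    refine Integrable.mono (hφint.norm.const_mul (D ^ (-(d : ℝ))))
      ((hKm s).aestronglyMeasurable.mul hφint.1) (ae_of_all _ fun t => ?_)
    by_cases h : φ t = 0
    · simp [h]
    · have htI : t ∈ I := by
        by_contra h'
        exact h (hφ0 t h')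
      have hts : D ≤ ‖t - s‖ := hdist' t htI s hs
      have htne : t ≠ s := by
        intro heq
        rw [heq, sub_self, norm_zero] at hts
        exact absurd hts (not_le.2 hDpos)
      have h1 : |K t s| ≤ ‖t - s‖ ^ (-(d : ℝ)) := hKsize t s htne
      have h2 : ‖t - s‖ ^ (-(d : ℝ)) ≤ D ^ (-(d : ℝ)) :=
        Real.rpow_le_rpow_of_nonpos hDpos hts (by simp)
      calc ‖K t s * φ t‖ = |K t s| * |φ t| := by rw [Real.norm_eq_abs, abs_mul]
        _ ≤ D ^ (-(d : ℝ)) * |φ t| :=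
            mul_le_mul_of_nonneg_right (h1.trans h2) (abs_nonneg _)
        _ = ‖D ^ (-(d : ℝ)) * ‖φ t‖‖ := by
            rw [Real.norm_eq_abs, Real.norm_eq_abs, abs_mul, abs_abs,
              abs_of_nonneg (by positivity : (0:ℝ) ≤ D ^ (-(d:ℝ)))]
  set B : ℝ := ℓI ^ ε / D ^ p with hB
  have hBpos : 0 < B := by positivity
  -- the inner estimate
  have hinner : ∀ s ∈ J, |∫ t, K t s * φ t ∂μ| ≤ B * ∫ t, |φ t| ∂μ := by
    intro s hs
    have hcancel : ∫ t, K t s * φ t ∂μ = ∫ t, (K t s - K c s) * φ t ∂μ := by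
      have e1 : ∫ t, (K t s - K c s) * φ t ∂μ
          = ∫ t, K t s * φ t ∂μ - ∫ t, K c s * φ t ∂μ := by
        simp_rw [sub_mul]
        exact integral_sub (hint1 s hs) (hφint.const_mul _)
      have e2 : ∫ t, K c s * φ t ∂μ = 0 := by
        rw [integral_const_mul, hφmean, mul_zero]
      rw [e1, e2, sub_zero]
    rw [hcancel]
    have hbd : ∀ t, ‖(K t s - K c s) * φ t‖ ≤ B * |φ t| := by
      intro t
      by_cases h : φ t = 0
      · simp [h]
      · have htI : t ∈ I := by
          by_contra h'
          exact h (hφ0 t h')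
        have hts : D ≤ ‖t - s‖ := hdist' t htI s hs
        have htc : ‖t - c‖ ≤ ℓI / 2 := hcenter t htI
        have hcond : ‖t - c‖ ≤ ‖t - s‖ / 2 := by
          have : ℓI ≤ ‖t - s‖ := le_trans (le_trans hℓIJ hdist) hts
          linarith
        have hsm := hKsmooth t c s hcond
        have hnum : ‖t - c‖ ^ ε ≤ ℓI ^ ε :=
          Real.rpow_le_rpow (norm_nonneg _) (by linarith) hε.le
        have hden : D ^ p ≤ ‖t - s‖ ^ p :=
          Real.rpow_le_rpow hDpos.le hts hppos.le
        have hKdiff : |K t s - K c s| ≤ B := by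
          refine hsm.trans ?_
          rw [hB]
          exact div_le_div₀ (by positivity) hnum (by positivity) hden
        rw [Real.norm_eq_abs, abs_mul]
        exact mul_le_mul_of_nonneg_right hKdiff (abs_nonneg _)
    calc |∫ t, (K t s - K c s) * φ t ∂μ|
        ≤ ∫ t, ‖(K t s - K c s) * φ t‖ ∂μ := by
          rw [← Real.norm_eq_abs]; exact norm_integral_le_integral_norm _
      _ ≤ ∫ t, B * |φ t| ∂μ := by
          refine integral_mono_of_nonneg (ae_of_all _ fun t => norm_nonneg _)
            ((hφint.abs.const_mul B)) (ae_of_all _ hbd)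
      _ = B * ∫ t, |φ t| ∂μ := integral_const_mul _ _
  -- ψ is integrable
  have hJm : MeasurableSet J := cube_measurable aJ ℓJ
  have hIm : MeasurableSet I := cube_measurable aI ℓI
  have hνJ : ν J < ∞ := (cube_compact aJ ℓJ).measure_lt_top
  have hμI : μ I < ∞ := (cube_compact aI ℓI).measure_lt_top
  have hψint : Integrable ψ ν := by
    haveI : Fact (ν J < ∞) := ⟨hνJ⟩
    have hon : IntegrableOn ψ J ν :=
      MemLp.integrable (by norm_num) (hψ2.restrict J)
    have : J.indicator ψ = ψ := by
      funext x
      by_cases hx : x ∈ J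
      · simp [indicator_of_mem hx]
      · simp [indicator_of_notMem hx, hψ0 x hx]
    rw [← this]
    exact (integrable_indicator_iff hJm).2 hon
  -- outer estimate
  set C : ℝ := B * ∫ t, |φ t| ∂μ with hCdef
  have hφabs_nonneg : 0 ≤ ∫ t, |φ t| ∂μ := integral_nonneg fun t => abs_nonneg _
  have hCnonneg : 0 ≤ C := mul_nonneg hBpos.le hφabs_nonneg
  have houter : |∫ s, (∫ t, K t s * φ t ∂μ) * ψ s ∂ν| ≤ C * ∫ s, |ψ s| ∂ν := by
    have hbd : ∀ s, ‖(∫ t, K t s * φ t ∂μ) * ψ s‖ ≤ C * |ψ s| := by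
      intro s
      by_cases h : ψ s = 0
      · simp [h]
      · have hsJ : s ∈ J := by
          by_contra h'
          exact h (hψ0 s h')
        rw [Real.norm_eq_abs, abs_mul]
        exact mul_le_mul_of_nonneg_right (hinner s hsJ) (abs_nonneg _)
    calc |∫ s, (∫ t, K t s * φ t ∂μ) * ψ s ∂ν|
        ≤ ∫ s, ‖(∫ t, K t s * φ t ∂μ) * ψ s‖ ∂ν := by
          rw [← Real.norm_eq_abs]; exact norm_integral_le_integral_norm _
      _ ≤ ∫ s, C * |ψ s| ∂ν := by
          refine integral_mono_of_nonneg (ae_of_all _ fun s => norm_nonneg _)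
            (hψint.abs.const_mul C) (ae_of_all _ hbd)
      _ = C * ∫ s, |ψ s| ∂ν := integral_const_mul _ _
  -- Cauchy–Schwarz
  have hφCS : ∫ t, |φ t| ∂μ ≤ (μ I).toReal ^ (1/2 : ℝ) * (eLpNorm φ 2 μ).toReal :=
    integral_abs_le_sqrt_mul hIm hμI.ne hφ2 hφ0
  have hψCS : ∫ s, |ψ s| ∂ν ≤ (ν J).toReal ^ (1/2 : ℝ) * (eLpNorm ψ 2 ν).toReal :=
    integral_abs_le_sqrt_mul hJm hνJ.ne hψ2 hψ0
  have hψabs_nonneg : 0 ≤ ∫ s, |ψ s| ∂ν := integral_nonneg fun s => abs_nonneg _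
  have hcomb : |∫ s, (∫ t, K t s * φ t ∂μ) * ψ s ∂ν|
      ≤ B * (((μ I).toReal ^ (1/2 : ℝ) * (eLpNorm φ 2 μ).toReal)
            * ((ν J).toReal ^ (1/2 : ℝ) * (eLpNorm ψ 2 ν).toReal)) := by
    refine houter.trans ?_
    rw [hCdef, mul_assoc]
    refine mul_le_mul_of_nonneg_left ?_ hBpos.le
    refine mul_le_mul hφCS hψCS hψabs_nonneg ?_
    positivity
  -- comparison of denominators
  have hBle : B ≤ 3 ^ p * (ℓI ^ ε / (D + ℓI + ℓJ) ^ p) := by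
    have hsum : 0 < D + ℓI + ℓJ := by linarith
    have h3 : (D + ℓI + ℓJ) ^ p ≤ 3 ^ p * D ^ p := by
      rw [← Real.mul_rpow (by norm_num) hDpos.le]
      refine Real.rpow_le_rpow (by positivity) ?_ hppos.le
      have : ℓI ≤ D := le_trans hℓIJ hdist
      have : ℓJ ≤ D := hdist
      linarith
    rw [hB, mul_div_assoc', div_le_div_iff₀ (by positivity) (by positivity)]
    calc ℓI ^ ε * (D + ℓI + ℓJ) ^ p ≤ ℓI ^ ε * (3 ^ p * D ^ p) :=
          mul_le_mul_of_nonneg_left h3 (by positivity)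
      _ = 3 ^ p * ℓI ^ ε * D ^ p := by ring
  calc |∫ s, (∫ t, K t s * φ t ∂μ) * ψ s ∂ν|
      ≤ B * (((μ I).toReal ^ (1/2 : ℝ) * (eLpNorm φ 2 μ).toReal)
            * ((ν J).toReal ^ (1/2 : ℝ) * (eLpNorm ψ 2 ν).toReal)) := hcomb
    _ ≤ (3 ^ p * (ℓI ^ ε / (D + ℓI + ℓJ) ^ p)) *
          (((μ I).toReal ^ (1/2 : ℝ) * (eLpNorm φ 2 μ).toReal)
            * ((ν J).toReal ^ (1/2 : ℝ) * (eLpNorm ψ 2 ν).toReal)) := by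
        refine mul_le_mul_of_nonneg_right hBle ?_
        positivity
    _ = 3 ^ p * (ℓI ^ ε / (D + ℓI + ℓJ) ^ p)
          * ((μ I).toReal) ^ (1/2 : ℝ) * ((ν J).toReal) ^ (1/2 : ℝ)
          * (eLpNorm φ 2 μ).toReal * (eLpNorm ψ 2 ν).toReal := by ring
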